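/- Let d ≥ 1 and 0 < α < d. There exists a constant C = C(α,d) > 0 such that for every λ' > 0, every c ≥ 0, all 0 < t ≤ t' and all x, y ∈ ℝ^d, ∫_{ℝ^d} ∫_{ℝ^d} e^{λ'(|w|+|z|)} p_t(x−w) p_{t'}(y−z) (|w−z|^{-α} + c) dw dz ≤ C e^{2(λ')² t'} e^{λ'(|x|+|y|)} ((t+t')^{-α/2} + c). -/

import Mathlib

open Real MeasureTheory
open Metric Set Filter

/-- The `d`-dimensional heat kernel `p_t(x) = (2πt)^{-d/2} exp(-|x|²/(2t))`. -/
noncomputable def heatKernel (d : ℕ) (t : ℝ) (x : EuclideanSpace ℝ (Fin d)) : ℝ :=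
  (2 * Real.pi * t) ^ (-(d : ℝ) / 2) * Real.exp (-‖x‖ ^ 2 / (2 * t))

lemma riesz_ball_lintegral (d : ℕ) (hd : 1 ≤ d) (α : ℝ) (hα0 : 0 < α) (hαd : α < d)
    (R : ℝ) (hR : 0 < R) :
    ∫⁻ z in ball (0 : EuclideanSpace ℝ (Fin d)) R, ENNReal.ofReal (‖z‖ ^ (-α)) ≤
      volume (ball (0 : EuclideanSpace ℝ (Fin d)) 1) *
        ENNReal.ofReal ((1 + α / ((d : ℝ) - α)) * R ^ ((d : ℝ) - α)) := by
  haveI : Nontrivial (EuclideanSpace ℝ (Fin d)) := by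
    refine Module.nontrivial_of_finrank_pos (R := ℝ) (M := EuclideanSpace ℝ (Fin d)) ?_
    rw [finrank_euclideanSpace_fin]; omega
  have hdα : 0 < (d : ℝ) - α := by linarith
  set E := EuclideanSpace ℝ (Fin d)
  set volB := volume (ball (0 : E) 1) with hvolB
  set T : ℝ := R ^ (-α) with hT
  have hTpos : 0 < T := rpow_pos_of_pos hR _
  rw [lintegral_eq_lintegral_meas_le _ (Eventually.of_forall fun z => by positivity)
    (by fun_prop)]
  have key : ∫⁻ s in Ioi (0:ℝ),
      (volume.restrict (ball (0:EuclideanSpace ℝ (Fin d)) R)) {a | s ≤ ‖a‖ ^ (-α)} ≤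
      (∫⁻ _ in Ioc (0:ℝ) T, volume (ball (0:EuclideanSpace ℝ (Fin d)) R)) +
      ∫⁻ s in Ioi T, ENNReal.ofReal (s ^ (-((d:ℝ)/α))) * volB := by
    rw [← Ioc_union_Ioi_eq_Ioi hTpos.le]
    refine le_trans (lintegral_union_le _ _ _) (add_le_add ?_ ?_)
    · refine lintegral_mono fun s => ?_
      exact le_trans (measure_mono (subset_univ _)) (le_of_eq (Measure.restrict_apply_univ _))
    · refine setLIntegral_mono' measurableSet_Ioi fun s hs => ?_
      have hs0 : 0 < s := lt_trans hTpos hs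
      have hsub : {a : E | s ≤ ‖a‖ ^ (-α)} ⊆ closedBall 0 (s ^ (-α⁻¹)) := by
        intro a ha
        simp only [mem_setOf_eq] at ha
        rcases eq_or_lt_of_le (norm_nonneg a) with h0 | h0
        · exfalso
          rw [← h0, Real.zero_rpow (neg_ne_zero.mpr hα0.ne')] at ha
          exact absurd (lt_of_lt_of_le hs0 ha) (lt_irrefl 0)
        · have h1 := Real.rpow_le_rpow_of_nonpos hs0 ha
            (neg_nonpos.mpr (inv_nonneg.mpr hα0.le))
          rw [← Real.rpow_mul (norm_nonneg a), neg_mul_neg,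
            mul_inv_cancel₀ hα0.ne', Real.rpow_one] at h1
          simpa [mem_closedBall_zero_iff] using h1
      refine le_trans (le_trans (Measure.restrict_le_self _) (measure_mono hsub)) ?_
      rw [Measure.addHaar_closedBall volume (0:E) (by positivity)]
      rw [finrank_euclideanSpace_fin]
      refine mul_le_mul_left (ENNReal.ofReal_le_ofReal ?_) _
      rw [← Real.rpow_natCast (s ^ (-α⁻¹)) d, ← Real.rpow_mul hs0.le]
      apply le_of_eq; congr 1; field_simp
  refine le_trans key ?_
  have h1 : ∫⁻ _ in Ioc (0:ℝ) T, volume (ball (0:EuclideanSpace ℝ (Fin d)) R) =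
      volB * ENNReal.ofReal (R ^ ((d:ℝ) - α)) := by
    rw [setLIntegral_const, Real.volume_Ioc, sub_zero,
      Measure.addHaar_ball volume (0:E) hR.le, finrank_euclideanSpace_fin]
    calc ENNReal.ofReal (R ^ d) * volB * ENNReal.ofReal T
        = volB * (ENNReal.ofReal (R ^ d) * ENNReal.ofReal T) := by ring
      _ = volB * ENNReal.ofReal (R ^ ((d:ℝ) - α)) := by
          rw [← ENNReal.ofReal_mul (by positivity : (0:ℝ) ≤ R ^ d)]
          congr 1
          rw [← Real.rpow_natCast R d, hT, ← Real.rpow_add hR, sub_eq_add_neg]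
  have h2 : ∫⁻ s in Ioi T, ENNReal.ofReal (s ^ (-((d:ℝ)/α))) * volB ≤
      volB * ENNReal.ofReal (α / ((d:ℝ)-α) * R ^ ((d:ℝ) - α)) := by
    rw [lintegral_mul_const _ (by fun_prop), mul_comm]
    refine mul_le_mul_right (le_of_eq ?_) _
    have hlt : -((d:ℝ)/α) < -1 := by
      rw [neg_lt_neg_iff, lt_div_iff₀ hα0]; linarith
    rw [← ofReal_integral_eq_lintegral_ofReal (integrableOn_Ioi_rpow_of_lt hlt hTpos)
      ((ae_restrict_iff' measurableSet_Ioi).mpr (Eventually.of_forall fun s hs =>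
        Real.rpow_nonneg (le_of_lt (lt_trans hTpos hs)) _))]
    congr 1
    rw [integral_Ioi_rpow_of_lt hlt hTpos]
    have hTv : T ^ (-((d:ℝ)/α) + 1) = R ^ ((d:ℝ) - α) := by
      rw [hT, ← Real.rpow_mul hR.le]
      congr 1; field_simp; ring
    rw [hTv]
    have h3 : -((d:ℝ)/α) + 1 ≠ 0 := by
      intro h
      have : (d:ℝ) = α := by field_simp at h; linarith
      linarith
    rw [div_eq_iff h3]
    field_simp
    ring
  calc _ ≤ volB * ENNReal.ofReal (R ^ ((d:ℝ) - α)) +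
        volB * ENNReal.ofReal (α / ((d:ℝ)-α) * R ^ ((d:ℝ) - α)) := add_le_add h1.le h2
    _ = _ := by
      rw [← mul_add, ← ENNReal.ofReal_add (by positivity) (by positivity)]
      congr 2
      ring

lemma riesz_ball_integrableOn (d : ℕ) (hd : 1 ≤ d) (α : ℝ) (hα0 : 0 < α) (hαd : α < d)
    (R : ℝ) (hR : 0 < R) :
    IntegrableOn (fun z : EuclideanSpace ℝ (Fin d) => ‖z‖ ^ (-α)) (ball 0 R) := by
  constructor
  · exact (Measurable.aestronglyMeasurable (by fun_prop)).restrict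
  · rw [HasFiniteIntegral]
    have : ∀ z : EuclideanSpace ℝ (Fin d), (‖‖z‖ ^ (-α)‖ₑ : ENNReal) =
        ENNReal.ofReal (‖z‖ ^ (-α)) := fun z => by
      rw [← ofReal_norm, Real.norm_of_nonneg (by positivity)]
    simp_rw [this]
    exact lt_of_le_of_lt (riesz_ball_lintegral d hd α hα0 hαd R hR)
      (ENNReal.mul_lt_top measure_ball_lt_top ENNReal.ofReal_lt_top)

lemma riesz_ball_integral (d : ℕ) (hd : 1 ≤ d) (α : ℝ) (hα0 : 0 < α) (hαd : α < d)
    (R : ℝ) (hR : 0 < R) :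
    ∫ z in ball (0 : EuclideanSpace ℝ (Fin d)) R, ‖z‖ ^ (-α) ≤
      (volume (ball (0 : EuclideanSpace ℝ (Fin d)) 1)).toReal *
        ((1 + α / ((d : ℝ) - α)) * R ^ ((d : ℝ) - α)) := by
  have hdα : 0 < (d : ℝ) - α := by linarith
  rw [integral_eq_lintegral_of_nonneg_ae
    (Eventually.of_forall fun z => by positivity)
    (Measurable.aestronglyMeasurable (by fun_prop)).restrict]
  have hb := riesz_ball_lintegral d hd α hα0 hαd R hR
  calc (∫⁻ z in ball (0 : EuclideanSpace ℝ (Fin d)) R, ENNReal.ofReal (‖z‖ ^ (-α))).toReal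
      ≤ (volume (ball (0 : EuclideanSpace ℝ (Fin d)) 1) *
        ENNReal.ofReal ((1 + α / ((d : ℝ) - α)) * R ^ ((d : ℝ) - α))).toReal := by
        refine ENNReal.toReal_mono ?_ hb
        exact (ENNReal.mul_lt_top measure_ball_lt_top ENNReal.ofReal_lt_top).ne
    _ = _ := by
        rw [ENNReal.toReal_mul, ENNReal.toReal_ofReal (by positivity)]

lemma gauss_intble (d : ℕ) {b : ℝ} (hb : 0 < b) :
    Integrable (fun v : EuclideanSpace ℝ (Fin d) => rexp (-b * ‖v‖ ^ 2)) := by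
  have h := (GaussianFourier.integrable_cexp_neg_mul_sq_norm_add (V := EuclideanSpace ℝ (Fin d))
      (b := (b : ℂ)) (by simpa using hb) 0 0).norm
  refine h.congr (Eventually.of_forall fun v => ?_)
  simp [Complex.norm_exp, ← Complex.ofReal_pow]

lemma gauss_int (d : ℕ) {b : ℝ} (hb : 0 < b) :
    ∫ v : EuclideanSpace ℝ (Fin d), rexp (-b * ‖v‖ ^ 2) = (π / b) ^ ((d:ℝ)/2) := by
  rw [GaussianFourier.integral_rexp_neg_mul_sq_norm hb, finrank_euclideanSpace_fin]

lemma gaussS_arg (s : ℝ) (x : ℝ) : -x / (4*s) = -(4*s)⁻¹ * x := by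
  rw [neg_div, div_eq_inv_mul, neg_mul]

lemma gaussS_intble (d : ℕ) {s : ℝ} (hs : 0 < s) (a : EuclideanSpace ℝ (Fin d)) :
    Integrable (fun z : EuclideanSpace ℝ (Fin d) => rexp (-‖a - z‖ ^ 2 / (4*s))) := by
  have h := (gauss_intble d (b := (4*s)⁻¹) (by positivity)).comp_sub_left a
  refine h.congr (Eventually.of_forall fun z => ?_)
  simp only []
  rw [← gaussS_arg]

lemma gaussS_int (d : ℕ) {s : ℝ} (hs : 0 < s) (a : EuclideanSpace ℝ (Fin d)) :
    ∫ z : EuclideanSpace ℝ (Fin d), rexp (-‖a - z‖ ^ 2 / (4*s)) = (4*π*s) ^ ((d:ℝ)/2) := by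
  simp_rw [gaussS_arg]
  rw [integral_sub_left_eq_self (fun v : EuclideanSpace ℝ (Fin d) => rexp (-(4*s)⁻¹ * ‖v‖^2))
    volume a, gauss_int d (by positivity)]
  congr 1
  field_simp

lemma riesz_shift_indicator (d : ℕ) (α R : ℝ) (b : EuclideanSpace ℝ (Fin d)) :
    ∀ z, (ball b R).indicator (fun z => ‖b - z‖ ^ (-α)) z =
      (ball (0 : EuclideanSpace ℝ (Fin d)) R).indicator (fun z => ‖z‖ ^ (-α)) (b - z) := by
  intro z
  by_cases hz : z ∈ ball b R
  · rw [indicator_of_mem hz, indicator_of_mem]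
    rw [mem_ball_zero_iff, ← norm_sub_rev]
    exact mem_ball_iff_norm.mp hz
  · rw [indicator_of_notMem hz, indicator_of_notMem]
    rw [mem_ball_zero_iff, ← norm_sub_rev]
    exact fun h => hz (mem_ball_iff_norm.mpr h)

lemma riesz_shift_integrableOn (d : ℕ) (hd : 1 ≤ d) (α : ℝ) (hα0 : 0 < α) (hαd : α < d)
    (R : ℝ) (hR : 0 < R) (b : EuclideanSpace ℝ (Fin d)) :
    IntegrableOn (fun z : EuclideanSpace ℝ (Fin d) => ‖b - z‖ ^ (-α)) (ball b R) := by
  have h1 := (integrable_indicator_iff measurableSet_ball).mpr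
    (riesz_ball_integrableOn d hd α hα0 hαd R hR)
  have h2 := h1.comp_sub_left b
  rw [← integrable_indicator_iff measurableSet_ball]
  exact h2.congr (Eventually.of_forall fun z => (riesz_shift_indicator d α R b z).symm)

lemma riesz_shift_integral (d : ℕ) (α R : ℝ) (b : EuclideanSpace ℝ (Fin d)) :
    ∫ z in ball b R, ‖b - z‖ ^ (-α) =
      ∫ z in ball (0 : EuclideanSpace ℝ (Fin d)) R, ‖z‖ ^ (-α) := by
  rw [← integral_indicator measurableSet_ball, ← integral_indicator measurableSet_ball]
  simp_rw [riesz_shift_indicator d α R b]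
  exact integral_sub_left_eq_self _ volume b

set_option maxHeartbeats 1000000 in
lemma gaussRiesz (d : ℕ) (hd : 1 ≤ d) (α : ℝ) (hα0 : 0 < α) (hαd : α < d)
    {s : ℝ} (hs : 0 < s) (a b : EuclideanSpace ℝ (Fin d)) :
    Integrable (fun z : EuclideanSpace ℝ (Fin d) =>
        rexp (-‖a - z‖ ^ 2 / (4*s)) * ‖b - z‖ ^ (-α)) ∧
      ∫ z : EuclideanSpace ℝ (Fin d), rexp (-‖a - z‖ ^ 2 / (4*s)) * ‖b - z‖ ^ (-α) ≤
        ((volume (ball (0 : EuclideanSpace ℝ (Fin d)) 1)).toReal * (1 + α/((d:ℝ)-α))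
          + (4*π) ^ ((d:ℝ)/2)) * s ^ (((d:ℝ)-α)/2) := by
  set g : EuclideanSpace ℝ (Fin d) → ℝ := fun z => rexp (-‖a - z‖ ^ 2 / (4*s)) * ‖b - z‖ ^ (-α) with hg
  set R : ℝ := Real.sqrt s with hRdef
  have hR : 0 < R := Real.sqrt_pos.mpr hs
  have hm1 : Measurable (fun z : EuclideanSpace ℝ (Fin d) => rexp (-‖a - z‖ ^ 2 / (4*s))) := by fun_prop
  have hm2 : Measurable (fun z : EuclideanSpace ℝ (Fin d) => ‖b - z‖ ^ (-α)) := by fun_prop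
  have hgm : AEStronglyMeasurable g volume := (hm1.mul hm2).aestronglyMeasurable
  have hgnn : ∀ z, 0 ≤ g z := fun z => by positivity
  have hexp1 : ∀ z : EuclideanSpace ℝ (Fin d), rexp (-‖a - z‖ ^ 2 / (4*s)) ≤ 1 := fun z => by
    rw [Real.exp_le_one_iff, neg_div]
    exact neg_nonpos.mpr (by positivity)
  have hball : IntegrableOn g (ball b R) := by
    refine Integrable.mono' (riesz_shift_integrableOn d hd α hα0 hαd R hR b) hgm.restrict
      (Eventually.of_forall fun z => ?_)
    rw [Real.norm_of_nonneg (hgnn z)]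
    calc g z ≤ 1 * ‖b - z‖ ^ (-α) := by
          exact mul_le_mul_of_nonneg_right (hexp1 z) (by positivity)
      _ = ‖b - z‖ ^ (-α) := one_mul _
  have hfar : ∀ z : EuclideanSpace ℝ (Fin d), z ∉ ball b R → ‖b - z‖ ^ (-α) ≤ R ^ (-α) := by
    intro z hz
    have h1 : R ≤ ‖b - z‖ := by
      rw [← norm_sub_rev, ← dist_eq_norm]
      exact le_of_not_gt fun h => hz (mem_ball.mpr h)
    exact Real.rpow_le_rpow_of_nonpos hR h1 (by linarith)
  have hcompl : IntegrableOn g (ball b R)ᶜ := by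
    refine Integrable.mono' (((gaussS_intble d hs a).const_mul (R ^ (-α))).integrableOn)
      hgm.restrict ?_
    rw [ae_restrict_iff' measurableSet_ball.compl]
    refine Eventually.of_forall fun z hz => ?_
    rw [Real.norm_of_nonneg (hgnn z)]
    calc g z ≤ rexp (-‖a - z‖ ^ 2 / (4*s)) * R ^ (-α) :=
          mul_le_mul_of_nonneg_left (hfar z hz) (Real.exp_nonneg _)
      _ = R ^ (-α) * rexp (-‖a - z‖ ^ 2 / (4*s)) := mul_comm _ _
  have hint : Integrable g := by
    have := hball.union hcompl
    rwa [union_compl_self, integrableOn_univ] at this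
  refine ⟨hint, ?_⟩
  have hsplit : ∫ z, g z = (∫ z in ball b R, g z) + ∫ z in (ball b R)ᶜ, g z :=
    (integral_add_compl measurableSet_ball hint).symm
  have hbd1 : ∫ z in ball b R, g z ≤
      (volume (ball (0 : EuclideanSpace ℝ (Fin d)) 1)).toReal * (1 + α/((d:ℝ)-α)) * R ^ ((d:ℝ)-α) := by
    calc ∫ z in ball b R, g z ≤ ∫ z in ball b R, ‖b - z‖ ^ (-α) := by
          refine setIntegral_mono_on hball (riesz_shift_integrableOn d hd α hα0 hαd R hR b)
            measurableSet_ball fun z _ => ?_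
          calc g z ≤ 1 * ‖b - z‖ ^ (-α) :=
                mul_le_mul_of_nonneg_right (hexp1 z) (by positivity)
            _ = _ := one_mul _
      _ = ∫ z in ball (0:EuclideanSpace ℝ (Fin d)) R, ‖z‖ ^ (-α) := riesz_shift_integral d α R b
      _ ≤ (volume (ball (0 : EuclideanSpace ℝ (Fin d)) 1)).toReal * ((1 + α/((d:ℝ)-α)) * R ^ ((d:ℝ)-α)) :=
          riesz_ball_integral d hd α hα0 hαd R hR
      _ = _ := by ring
  have hbd2 : ∫ z in (ball b R)ᶜ, g z ≤ R ^ (-α) * (4*π*s) ^ ((d:ℝ)/2) := by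
    calc ∫ z in (ball b R)ᶜ, g z
        ≤ ∫ z in (ball b R)ᶜ, R ^ (-α) * rexp (-‖a - z‖ ^ 2 / (4*s)) := by
          refine setIntegral_mono_on hcompl
            (((gaussS_intble d hs a).const_mul (R ^ (-α))).integrableOn)
            measurableSet_ball.compl fun z hz => ?_
          calc g z ≤ rexp (-‖a - z‖ ^ 2 / (4*s)) * R ^ (-α) :=
                mul_le_mul_of_nonneg_left (hfar z hz) (Real.exp_nonneg _)
            _ = _ := mul_comm _ _
      _ ≤ ∫ z, R ^ (-α) * rexp (-‖a - z‖ ^ 2 / (4*s)) := by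
          refine setIntegral_le_integral ((gaussS_intble d hs a).const_mul (R ^ (-α)))
            (Eventually.of_forall fun z => by positivity)
      _ = R ^ (-α) * (4*π*s) ^ ((d:ℝ)/2) := by
          rw [integral_const_mul, gaussS_int d hs a]
  have hA : R ^ ((d:ℝ)-α) = s ^ (((d:ℝ)-α)/2) := by
    rw [hRdef, Real.sqrt_eq_rpow, ← Real.rpow_mul hs.le]
    congr 1; ring
  have hB : R ^ (-α) * (4*π*s) ^ ((d:ℝ)/2) = (4*π) ^ ((d:ℝ)/2) * s ^ (((d:ℝ)-α)/2) := by
    rw [hRdef, Real.sqrt_eq_rpow, ← Real.rpow_mul hs.le,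
      Real.mul_rpow (by positivity) hs.le, ← mul_assoc, mul_comm (s ^ (1/2*(-α))),
      mul_assoc, ← Real.rpow_add hs]
    congr 2; ring
  rw [hsplit]
  calc (∫ z in ball b R, g z) + ∫ z in (ball b R)ᶜ, g z ≤
      (volume (ball (0 : EuclideanSpace ℝ (Fin d)) 1)).toReal * (1 + α/((d:ℝ)-α)) * R ^ ((d:ℝ)-α)
        + R ^ (-α) * (4*π*s) ^ ((d:ℝ)/2) := add_le_add hbd1 hbd2
    _ = _ := by rw [hA, hB]; ring


lemma heatKernel_nonneg (d : ℕ) {t : ℝ} (ht : 0 < t) (x : EuclideanSpace ℝ (Fin d)) :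
    0 ≤ heatKernel d t x := by
  unfold heatKernel; positivity

lemma gaussRieszC (d : ℕ) (hd : 1 ≤ d) (α : ℝ) (hα0 : 0 < α) (hαd : α < d)
    {s : ℝ} (hs : 0 < s) {c : ℝ} (hc : 0 ≤ c) (a b : EuclideanSpace ℝ (Fin d)) :
    Integrable (fun z : EuclideanSpace ℝ (Fin d) =>
        rexp (-‖a - z‖ ^ 2 / (4*s)) * (‖b - z‖ ^ (-α) + c)) ∧
      ∫ z : EuclideanSpace ℝ (Fin d), rexp (-‖a - z‖ ^ 2 / (4*s)) * (‖b - z‖ ^ (-α) + c) ≤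
        ((volume (ball (0 : EuclideanSpace ℝ (Fin d)) 1)).toReal * (1 + α/((d:ℝ)-α))
          + (4*π) ^ ((d:ℝ)/2)) * s ^ (((d:ℝ)-α)/2) + c * (4*π*s) ^ ((d:ℝ)/2) := by
  obtain ⟨h1, h2⟩ := gaussRiesz d hd α hα0 hαd hs a b
  have h3 : Integrable (fun z : EuclideanSpace ℝ (Fin d) =>
      rexp (-‖a - z‖ ^ 2 / (4*s)) * c) := (gaussS_intble d hs a).mul_const c
  have heq : (fun z : EuclideanSpace ℝ (Fin d) =>
      rexp (-‖a - z‖ ^ 2 / (4*s)) * (‖b - z‖ ^ (-α) + c)) =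
      (fun z => rexp (-‖a - z‖ ^ 2 / (4*s)) * ‖b - z‖ ^ (-α)
        + rexp (-‖a - z‖ ^ 2 / (4*s)) * c) := by
    funext z; ring
  constructor
  · rw [heq]; exact h1.add h3
  · rw [heq, integral_add h1 h3, integral_mul_const, gaussS_int d hs a]
    exact add_le_add h2 (le_of_eq (mul_comm _ _))

lemma expgauss_ptwise (d : ℕ) {s lam : ℝ} (hs : 0 < s) (hlam : 0 ≤ lam)
    (a z : EuclideanSpace ℝ (Fin d)) :
    rexp (lam * ‖z‖) * heatKernel d s (a - z) ≤
      rexp (lam * ‖a‖) * rexp (lam ^ 2 * s) *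
        ((2*π*s) ^ (-(d:ℝ)/2) * rexp (-‖a - z‖ ^ 2 / (4*s))) := by
  unfold heatKernel
  have hv : ‖z‖ ≤ ‖a‖ + ‖a - z‖ := by
    calc ‖z‖ = ‖a - (a - z)‖ := by rw [sub_sub_cancel]
      _ ≤ ‖a‖ + ‖a - z‖ := norm_sub_le _ _
  have hkey : lam * ‖z‖ + (-‖a - z‖ ^ 2 / (2*s)) ≤
      lam * ‖a‖ + lam ^ 2 * s + (-‖a - z‖ ^ 2 / (4*s)) := by
    have hlam2 : lam * ‖z‖ ≤ lam * ‖a‖ + lam * ‖a - z‖ := by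
      rw [← mul_add]; exact mul_le_mul_of_nonneg_left hv hlam
    have hid : lam * ‖a - z‖ + (-‖a - z‖ ^ 2 / (2*s))
        - (lam ^ 2 * s + (-‖a - z‖ ^ 2 / (4*s)))
        = -((‖a - z‖ - 2*lam*s) ^ 2) / (4*s) := by
      field_simp; ring
    have hnn : 0 ≤ (‖a - z‖ - 2*lam*s) ^ 2 / (4*s) := by positivity
    have : -((‖a - z‖ - 2*lam*s) ^ 2) / (4*s) ≤ 0 := by
      rw [neg_div]; linarith
    linarith [hid, this]
  calc rexp (lam * ‖z‖) * ((2*π*s) ^ (-(d:ℝ)/2) * rexp (-‖a - z‖ ^ 2 / (2*s)))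
      = (2*π*s) ^ (-(d:ℝ)/2) * rexp (lam * ‖z‖ + (-‖a - z‖ ^ 2 / (2*s))) := by
        rw [Real.exp_add]; ring
    _ ≤ (2*π*s) ^ (-(d:ℝ)/2) *
        rexp (lam * ‖a‖ + lam ^ 2 * s + (-‖a - z‖ ^ 2 / (4*s))) := by
        refine mul_le_mul_of_nonneg_left (Real.exp_le_exp.mpr hkey) (by positivity)
    _ = rexp (lam * ‖a‖) * rexp (lam ^ 2 * s) *
        ((2*π*s) ^ (-(d:ℝ)/2) * rexp (-‖a - z‖ ^ 2 / (4*s))) := by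
        rw [Real.exp_add, Real.exp_add]; ring

lemma rpow_ratio (d : ℕ) {s : ℝ} (hs : 0 < s) :
    (2*π*s) ^ (-(d:ℝ)/2) * (4*π*s) ^ ((d:ℝ)/2) = 2 ^ ((d:ℝ)/2) := by
  have h2 : (4*π*s)/(2*π*s) = 2 := by
    field_simp
    ring
  calc (2*π*s) ^ (-(d:ℝ)/2) * (4*π*s) ^ ((d:ℝ)/2)
      = (4*π*s) ^ ((d:ℝ)/2) / (2*π*s) ^ ((d:ℝ)/2) := by
        rw [neg_div, Real.rpow_neg (by positivity)]; ring
    _ = ((4*π*s)/(2*π*s)) ^ ((d:ℝ)/2) :=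
        (Real.div_rpow (by positivity) (by positivity) _).symm
    _ = 2 ^ ((d:ℝ)/2) := by rw [h2]

lemma expGauss (d : ℕ) {s lam : ℝ} (hs : 0 < s) (hlam : 0 ≤ lam)
    (a : EuclideanSpace ℝ (Fin d)) :
    Integrable (fun u : EuclideanSpace ℝ (Fin d) =>
        rexp (lam * ‖u‖) * heatKernel d s (a - u)) ∧
      ∫ u : EuclideanSpace ℝ (Fin d), rexp (lam * ‖u‖) * heatKernel d s (a - u) ≤
        2 ^ ((d:ℝ)/2) * rexp (lam * ‖a‖) * rexp (lam ^ 2 * s) := by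
  have hMint : Integrable (fun u : EuclideanSpace ℝ (Fin d) =>
      rexp (lam * ‖a‖) * rexp (lam ^ 2 * s) *
        ((2*π*s) ^ (-(d:ℝ)/2) * rexp (-‖a - u‖ ^ 2 / (4*s)))) :=
    (((gaussS_intble d hs a).const_mul _).const_mul _)
  have hm : Measurable (fun u : EuclideanSpace ℝ (Fin d) =>
      rexp (lam * ‖u‖) * heatKernel d s (a - u)) := by
    unfold heatKernel; fun_prop
  have hnn : ∀ u : EuclideanSpace ℝ (Fin d),
      0 ≤ rexp (lam * ‖u‖) * heatKernel d s (a - u) := fun u =>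
    mul_nonneg (Real.exp_nonneg _) (heatKernel_nonneg d hs _)
  have hint : Integrable (fun u : EuclideanSpace ℝ (Fin d) =>
      rexp (lam * ‖u‖) * heatKernel d s (a - u)) := by
    refine Integrable.mono' hMint hm.aestronglyMeasurable
      (Eventually.of_forall fun u => ?_)
    rw [Real.norm_of_nonneg (hnn u)]
    exact expgauss_ptwise d hs hlam a u
  refine ⟨hint, ?_⟩
  calc ∫ u : EuclideanSpace ℝ (Fin d), rexp (lam * ‖u‖) * heatKernel d s (a - u)
      ≤ ∫ u : EuclideanSpace ℝ (Fin d), rexp (lam * ‖a‖) * rexp (lam ^ 2 * s) *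
        ((2*π*s) ^ (-(d:ℝ)/2) * rexp (-‖a - u‖ ^ 2 / (4*s))) :=
        integral_mono_of_nonneg (Eventually.of_forall hnn) hMint
          (Eventually.of_forall fun u => expgauss_ptwise d hs hlam a u)
    _ = rexp (lam * ‖a‖) * rexp (lam ^ 2 * s) *
        ((2*π*s) ^ (-(d:ℝ)/2) * (4*π*s) ^ ((d:ℝ)/2)) := by
        rw [integral_const_mul, integral_const_mul, gaussS_int d hs a]
    _ = 2 ^ ((d:ℝ)/2) * rexp (lam * ‖a‖) * rexp (lam ^ 2 * s) := by
        rw [rpow_ratio d hs]; ring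


set_option maxHeartbeats 1000000 in
/-- For `0 < α < d` there is `C = C(α,d) > 0` such that for every `λ' > 0`,
`c ≥ 0`, `0 < t ≤ t'` and `x, y ∈ ℝ^d`,
`∫∫ e^{λ'(|w|+|z|)} p_t(x−w) p_{t'}(y−z) (|w−z|^{-α}+c) dw dz
  ≤ C e^{2λ'²t'} e^{λ'(|x|+|y|)} ((t+t')^{-α/2}+c)`. -/
theorem heatKernel_double_convolution_riesz_exp_bound
    (d : ℕ) (hd : 1 ≤ d) (α : ℝ) (hα0 : 0 < α) (hαd : α < d) :
    ∃ C : ℝ, 0 < C ∧ ∀ (lam : ℝ), 0 < lam → ∀ (c : ℝ), 0 ≤ c →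
      ∀ (t t' : ℝ), 0 < t → t ≤ t' → ∀ (x y : EuclideanSpace ℝ (Fin d)),
      (∫ w : EuclideanSpace ℝ (Fin d), ∫ z : EuclideanSpace ℝ (Fin d),
          Real.exp (lam * (‖w‖ + ‖z‖)) * heatKernel d t (x - w) * heatKernel d t' (y - z) *
            (‖w - z‖ ^ (-α) + c))
        ≤ C * Real.exp (2 * lam ^ 2 * t') * Real.exp (lam * (‖x‖ + ‖y‖)) *
            ((t + t') ^ (-α / 2) + c) := by
  have hdα : 0 < (d : ℝ) - α := by linarith
  set K1 : ℝ := (volume (ball (0 : EuclideanSpace ℝ (Fin d)) 1)).toReal * (1 + α/((d:ℝ)-α))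
    + (4*π) ^ ((d:ℝ)/2) with hK1
  have hK1nn : 0 ≤ K1 := by
    have h1 : (0:ℝ) ≤ α/((d:ℝ)-α) := div_nonneg hα0.le hdα.le
    have h2 : (0:ℝ) < (4*π) ^ ((d:ℝ)/2) := Real.rpow_pos_of_pos (by positivity) _
    have h3 : (0:ℝ) ≤ (volume (ball (0 : EuclideanSpace ℝ (Fin d)) 1)).toReal :=
      ENNReal.toReal_nonneg
    rw [hK1]
    nlinarith
  set C1 : ℝ := 2 ^ ((d:ℝ)/2) * (K1 * (2*π) ^ (-(d:ℝ)/2) * 2 ^ (α/2)) with hC1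
  set C2 : ℝ := 2 ^ ((d:ℝ)/2) * 2 ^ ((d:ℝ)/2) with hC2
  have hC1nn : 0 ≤ C1 := by
    have := Real.rpow_pos_of_pos (show (0:ℝ) < 2 by norm_num) ((d:ℝ)/2)
    have := Real.rpow_pos_of_pos (show (0:ℝ) < 2*π by positivity) (-(d:ℝ)/2)
    rw [hC1]
    have h1 := Real.rpow_pos_of_pos (show (0:ℝ) < 2 by norm_num) ((d:ℝ)/2)
    have h2 := Real.rpow_pos_of_pos (show (0:ℝ) < 2*π by positivity) (-(d:ℝ)/2)
    have h3 := Real.rpow_pos_of_pos (show (0:ℝ) < 2 by norm_num) (α/2)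
    exact mul_nonneg h1.le (mul_nonneg (mul_nonneg hK1nn h2.le) h3.le)
  have hC2pos : 0 < C2 := by
    have := Real.rpow_pos_of_pos (show (0:ℝ) < 2 by norm_num) ((d:ℝ)/2)
    rw [hC2]
    nlinarith
  refine ⟨C1 + C2, by linarith, ?_⟩
  intro lam hlam c hc t t' ht htt' x y
  have ht' : 0 < t' := lt_of_lt_of_le ht htt'
  -- the inner constant
  set M0 : ℝ := rexp (lam * ‖y‖) * rexp (lam ^ 2 * t') * (2*π*t') ^ (-(d:ℝ)/2) with hM0
  have hM0nn : 0 ≤ M0 := by positivity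
  set IB : ℝ := K1 * t' ^ (((d:ℝ)-α)/2) + c * (4*π*t') ^ ((d:ℝ)/2) with hIB
  have hIBnn : 0 ≤ IB := by
    have h1 : (0:ℝ) ≤ t' ^ (((d:ℝ)-α)/2) := (Real.rpow_pos_of_pos ht' _).le
    have h2 : (0:ℝ) ≤ (4*π*t') ^ ((d:ℝ)/2) := (Real.rpow_pos_of_pos (by positivity) _).le
    rw [hIB]
    nlinarith [mul_nonneg hK1nn h1, mul_nonneg hc h2]
  -- inner bound
  have hFnn : ∀ w z : EuclideanSpace ℝ (Fin d),
      0 ≤ Real.exp (lam * (‖w‖ + ‖z‖)) * heatKernel d t (x - w) * heatKernel d t' (y - z) *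
        (‖w - z‖ ^ (-α) + c) := by
    intro w z
    have h1 := heatKernel_nonneg d ht (x - w)
    have h2 := heatKernel_nonneg d ht' (y - z)
    have h3 : (0:ℝ) ≤ ‖w - z‖ ^ (-α) + c := by positivity
    positivity
  have hInner : ∀ w : EuclideanSpace ℝ (Fin d),
      (∫ z : EuclideanSpace ℝ (Fin d),
        Real.exp (lam * (‖w‖ + ‖z‖)) * heatKernel d t (x - w) * heatKernel d t' (y - z) *
          (‖w - z‖ ^ (-α) + c))
      ≤ (M0 * IB) * (rexp (lam * ‖w‖) * heatKernel d t (x - w)) := by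
    intro w
    have hCw : 0 ≤ rexp (lam * ‖w‖) * heatKernel d t (x - w) :=
      mul_nonneg (Real.exp_nonneg _) (heatKernel_nonneg d ht _)
    obtain ⟨hGint, hGbd⟩ := gaussRieszC d hd α hα0 hαd ht' hc y w
    have hHint : Integrable (fun z : EuclideanSpace ℝ (Fin d) =>
        (rexp (lam * ‖w‖) * heatKernel d t (x - w) * M0) *
          (rexp (-‖y - z‖ ^ 2 / (4*t')) * (‖w - z‖ ^ (-α) + c))) := hGint.const_mul _
    have hptwise : ∀ z : EuclideanSpace ℝ (Fin d),
        Real.exp (lam * (‖w‖ + ‖z‖)) * heatKernel d t (x - w) * heatKernel d t' (y - z) *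
          (‖w - z‖ ^ (-α) + c) ≤
        (rexp (lam * ‖w‖) * heatKernel d t (x - w) * M0) *
          (rexp (-‖y - z‖ ^ 2 / (4*t')) * (‖w - z‖ ^ (-α) + c)) := by
      intro z
      have hP : (0:ℝ) ≤ ‖w - z‖ ^ (-α) + c := by positivity
      have hB := expgauss_ptwise d ht' hlam.le y z
      calc Real.exp (lam * (‖w‖ + ‖z‖)) * heatKernel d t (x - w) * heatKernel d t' (y - z) *
            (‖w - z‖ ^ (-α) + c)
          = (rexp (lam * ‖w‖) * heatKernel d t (x - w)) *
            (rexp (lam * ‖z‖) * heatKernel d t' (y - z)) * (‖w - z‖ ^ (-α) + c) := by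
            rw [mul_add lam ‖w‖ ‖z‖, Real.exp_add]; ring
        _ ≤ (rexp (lam * ‖w‖) * heatKernel d t (x - w)) *
            (rexp (lam * ‖y‖) * rexp (lam ^ 2 * t') *
              ((2*π*t') ^ (-(d:ℝ)/2) * rexp (-‖y - z‖ ^ 2 / (4*t')))) *
            (‖w - z‖ ^ (-α) + c) := by
            exact mul_le_mul_of_nonneg_right (mul_le_mul_of_nonneg_left hB hCw) hP
        _ = (rexp (lam * ‖w‖) * heatKernel d t (x - w) * M0) *
            (rexp (-‖y - z‖ ^ 2 / (4*t')) * (‖w - z‖ ^ (-α) + c)) := by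
            rw [hM0]; ring
    calc (∫ z : EuclideanSpace ℝ (Fin d),
          Real.exp (lam * (‖w‖ + ‖z‖)) * heatKernel d t (x - w) * heatKernel d t' (y - z) *
            (‖w - z‖ ^ (-α) + c))
        ≤ ∫ z : EuclideanSpace ℝ (Fin d),
          (rexp (lam * ‖w‖) * heatKernel d t (x - w) * M0) *
            (rexp (-‖y - z‖ ^ 2 / (4*t')) * (‖w - z‖ ^ (-α) + c)) :=
          integral_mono_of_nonneg (Eventually.of_forall (hFnn w)) hHint
            (Eventually.of_forall hptwise)
      _ = (rexp (lam * ‖w‖) * heatKernel d t (x - w) * M0) *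
          ∫ z : EuclideanSpace ℝ (Fin d),
            rexp (-‖y - z‖ ^ 2 / (4*t')) * (‖w - z‖ ^ (-α) + c) := integral_const_mul _ _
      _ ≤ (rexp (lam * ‖w‖) * heatKernel d t (x - w) * M0) * IB := by
          refine mul_le_mul_of_nonneg_left hGbd (by positivity)
      _ = (M0 * IB) * (rexp (lam * ‖w‖) * heatKernel d t (x - w)) := by ring
  -- outer bound
  obtain ⟨hOint, hObd⟩ := expGauss d ht hlam.le x
  have houter : (∫ w : EuclideanSpace ℝ (Fin d), ∫ z : EuclideanSpace ℝ (Fin d),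
      Real.exp (lam * (‖w‖ + ‖z‖)) * heatKernel d t (x - w) * heatKernel d t' (y - z) *
        (‖w - z‖ ^ (-α) + c))
      ≤ (M0 * IB) * (2 ^ ((d:ℝ)/2) * rexp (lam * ‖x‖) * rexp (lam ^ 2 * t)) := by
    calc (∫ w : EuclideanSpace ℝ (Fin d), ∫ z : EuclideanSpace ℝ (Fin d),
        Real.exp (lam * (‖w‖ + ‖z‖)) * heatKernel d t (x - w) * heatKernel d t' (y - z) *
          (‖w - z‖ ^ (-α) + c))
        ≤ ∫ w : EuclideanSpace ℝ (Fin d),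
            (M0 * IB) * (rexp (lam * ‖w‖) * heatKernel d t (x - w)) := by
          refine integral_mono_of_nonneg
            (Eventually.of_forall fun w => integral_nonneg (hFnn w))
            (hOint.const_mul _) (Eventually.of_forall hInner)
      _ = (M0 * IB) * ∫ w : EuclideanSpace ℝ (Fin d),
            rexp (lam * ‖w‖) * heatKernel d t (x - w) := integral_const_mul _ _
      _ ≤ (M0 * IB) * (2 ^ ((d:ℝ)/2) * rexp (lam * ‖x‖) * rexp (lam ^ 2 * t)) :=
          mul_le_mul_of_nonneg_left hObd (mul_nonneg hM0nn hIBnn)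
  refine le_trans houter ?_
  -- final arithmetic
  have e3a : (2*π*t') ^ (-(d:ℝ)/2) * t' ^ (((d:ℝ)-α)/2) =
      (2*π) ^ (-(d:ℝ)/2) * t' ^ (-α/2) := by
    have : (2*π*t') ^ (-(d:ℝ)/2) = (2*π) ^ (-(d:ℝ)/2) * t' ^ (-(d:ℝ)/2) := by
      rw [← Real.mul_rpow (by positivity) ht'.le]
    rw [this, mul_assoc, ← Real.rpow_add ht']
    congr 2
    ring
  have e3b : (2*π*t') ^ (-(d:ℝ)/2) * (4*π*t') ^ ((d:ℝ)/2) = 2 ^ ((d:ℝ)/2) :=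
    rpow_ratio d ht'
  have e4 : t' ^ (-α/2) ≤ 2 ^ (α/2) * (t+t') ^ (-α/2) := by
    have h5 : (t+t')/2 ≤ t' := by linarith
    have h6 : (0:ℝ) < (t+t')/2 := by linarith
    have h7 : t' ^ (-α/2) ≤ ((t+t')/2) ^ (-α/2) :=
      Real.rpow_le_rpow_of_nonpos h6 h5 (by linarith)
    have h8 : ((t+t')/2) ^ (-α/2) = 2 ^ (α/2) * (t+t') ^ (-α/2) := by
      rw [Real.div_rpow (by linarith) (by norm_num), neg_div,
        Real.rpow_neg (by norm_num : (0:ℝ) ≤ 2), div_eq_mul_inv, inv_inv]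
      ring
    linarith
  have e2 : rexp (lam ^ 2 * t) * rexp (lam ^ 2 * t') ≤ rexp (2 * lam ^ 2 * t') := by
    rw [← Real.exp_add, Real.exp_le_exp]
    nlinarith [sq_nonneg lam]
  have hQ : (2*π*t') ^ (-(d:ℝ)/2) * IB * 2 ^ ((d:ℝ)/2) ≤
      (C1 + C2) * ((t+t') ^ (-α/2) + c) := by
    have hIBe : (2*π*t') ^ (-(d:ℝ)/2) * IB =
        K1 * ((2*π) ^ (-(d:ℝ)/2) * t' ^ (-α/2)) + c * 2 ^ ((d:ℝ)/2) := by
      rw [hIB, mul_add]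
      congr 1
      · rw [mul_comm K1 _, ← mul_assoc, e3a]; ring
      · rw [mul_comm c _, ← mul_assoc, e3b]; ring
    rw [hIBe]
    have h2d : (0:ℝ) < 2 ^ ((d:ℝ)/2) := Real.rpow_pos_of_pos (by norm_num) _
    have h2p : (0:ℝ) < (2*π) ^ (-(d:ℝ)/2) := Real.rpow_pos_of_pos (by positivity) _
    have httpos : (0:ℝ) < (t+t') ^ (-α/2) := Real.rpow_pos_of_pos (by linarith) _
    have key : K1 * ((2*π) ^ (-(d:ℝ)/2) * t' ^ (-α/2)) ≤
        K1 * (2*π) ^ (-(d:ℝ)/2) * (2 ^ (α/2) * (t+t') ^ (-α/2)) := by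
      rw [← mul_assoc]
      exact mul_le_mul_of_nonneg_left e4 (mul_nonneg hK1nn h2p.le)
    have expand : (K1 * ((2*π) ^ (-(d:ℝ)/2) * t' ^ (-α/2)) + c * 2 ^ ((d:ℝ)/2)) *
        2 ^ ((d:ℝ)/2) ≤
        (K1 * (2*π) ^ (-(d:ℝ)/2) * (2 ^ (α/2) * (t+t') ^ (-α/2)) + c * 2 ^ ((d:ℝ)/2)) *
        2 ^ ((d:ℝ)/2) := by
      have : K1 * ((2*π) ^ (-(d:ℝ)/2) * t' ^ (-α/2)) + c * 2 ^ ((d:ℝ)/2) ≤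
          K1 * (2*π) ^ (-(d:ℝ)/2) * (2 ^ (α/2) * (t+t') ^ (-α/2)) + c * 2 ^ ((d:ℝ)/2) := by
        linarith
      exact mul_le_mul_of_nonneg_right this h2d.le
    refine le_trans expand ?_
    have h2a : (0:ℝ) < 2 ^ (α/2) := Real.rpow_pos_of_pos (by norm_num) _
    rw [hC1, hC2]
    nlinarith [mul_nonneg (mul_nonneg hK1nn h2p.le) h2a.le,
      mul_nonneg hc httpos.le,
      mul_pos h2d h2d, mul_pos (mul_pos h2d h2d) httpos,
      mul_nonneg (mul_nonneg (mul_nonneg hK1nn h2p.le) h2a.le) hc]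
  calc (M0 * IB) * (2 ^ ((d:ℝ)/2) * rexp (lam * ‖x‖) * rexp (lam ^ 2 * t))
      = ((2*π*t') ^ (-(d:ℝ)/2) * IB * 2 ^ ((d:ℝ)/2)) *
        ((rexp (lam * ‖x‖) * rexp (lam * ‖y‖)) * (rexp (lam ^ 2 * t) * rexp (lam ^ 2 * t'))) := by
        rw [hM0]; ring
    _ ≤ ((C1 + C2) * ((t+t') ^ (-α/2) + c)) *
        ((rexp (lam * ‖x‖) * rexp (lam * ‖y‖)) * (rexp (lam ^ 2 * t) * rexp (lam ^ 2 * t'))) := by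
        refine mul_le_mul_of_nonneg_right hQ (by positivity)
    _ ≤ ((C1 + C2) * ((t+t') ^ (-α/2) + c)) *
        ((rexp (lam * ‖x‖) * rexp (lam * ‖y‖)) * rexp (2 * lam ^ 2 * t')) := by
        have hA : (0:ℝ) ≤ (C1 + C2) * ((t+t') ^ (-α/2) + c) := by
          have : (0:ℝ) ≤ (t+t') ^ (-α/2) + c := by positivity
          nlinarith
        refine mul_le_mul_of_nonneg_left (mul_le_mul_of_nonneg_left e2 (by positivity)) hA
    _ = (C1 + C2) * Real.exp (2 * lam ^ 2 * t') * Real.exp (lam * (‖x‖ + ‖y‖)) *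
        ((t + t') ^ (-α / 2) + c) := by
        rw [mul_add lam, Real.exp_add]
        ring
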